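/- Let X be a compact Hausdorff topological space, let X₀ be a dense subset of X, and let A be a uniformly bounded set of continuous real-valued functions on X. Suppose g : X → ℝ lies in the closure of A in the product topology on ℝ^X and g is discontinuous at some point of X. Then there exist a sequence (f_m) of elements of A, a sequence (x_n) of points of X₀, and real numbers r ≠ s such that: for every n, lim_m f_m(x_n) = g(x_n); lim_n g(x_n) = r; for every m, the limit d(m) = lim_n f_m(x_n) exists; and lim_m d(m) = s. In particular both iterated limits exist and are distinct. -/

import Mathlib

open Filter Topology

private lemma approx_on_finset' {X : Type*} [TopologicalSpace X]
    (A : Set (X → ℝ)) (g : X → ℝ) (hg : g ∈ closure A)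
    (t : Finset X) {ε : ℝ} (hε : 0 < ε) :
    ∃ f ∈ A, ∀ q ∈ t, |f q - g q| < ε := by
  have heq : {h : X → ℝ | ∀ q ∈ t, |h q - g q| < ε}
      = ⋂ q ∈ t, (fun h : X → ℝ => h q) ⁻¹' Metric.ball (g q) ε := by
    ext h; simp [Metric.mem_ball, Real.dist_eq]
  have hU : IsOpen {h : X → ℝ | ∀ q ∈ t, |h q - g q| < ε} := by
    rw [heq]
    exact isOpen_biInter_finset fun q _ =>
      Metric.isOpen_ball.preimage (continuous_apply q)
  have hgU : g ∈ {h : X → ℝ | ∀ q ∈ t, |h q - g q| < ε} := by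
    intro q _; simpa using hε
  obtain ⟨f, hfU, hfA⟩ := mem_closure_iff.mp hg _ hU hgU
  exact ⟨f, hfA, hfU⟩

private lemma exists_bad_point' {X : Type*} [TopologicalSpace X]
    (X₀ : Set X) (hX₀ : Dense X₀) (g : X → ℝ)
    (hdisc : ∃ x : X, ¬ ContinuousAt g x) :
    ∃ (p : X) (δ : ℝ), 0 < δ ∧ ∀ U ∈ 𝓝 p, ∃ z ∈ U, z ∈ X₀ ∧ δ ≤ |g z - g p| := by
  obtain ⟨x₀, hx₀⟩ := hdisc
  rw [ContinuousAt, Metric.tendsto_nhds] at hx₀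
  push_neg at hx₀
  obtain ⟨ε, hε, hfreq⟩ := hx₀
  simp only [← not_lt] at hfreq
  rw [Filter.frequently_iff] at hfreq
  by_cases hcase : ∀ U ∈ 𝓝 x₀, ∃ z ∈ U, z ∈ X₀ ∧ ε/3 ≤ |g z - g x₀|
  · exact ⟨x₀, ε/3, by linarith, hcase⟩
  · push_neg at hcase
    obtain ⟨U, hU, hUprop⟩ := hcase
    obtain ⟨V, hVU, hVopen, hx₀V⟩ := mem_nhds_iff.mp hU
    obtain ⟨y, hyV, hy⟩ := hfreq (hVopen.mem_nhds hx₀V)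
    have hy' : ε ≤ |g y - g x₀| := by
      rw [Real.dist_eq] at hy; linarith [not_lt.mp hy]
    refine ⟨y, ε/3, by linarith, fun W hW => ?_⟩
    have hWV : W ∩ V ∈ 𝓝 y := Filter.inter_mem hW (hVopen.mem_nhds hyV)
    obtain ⟨z, ⟨hzW, hzV⟩, hzX₀⟩ := mem_closure_iff_nhds.mp (hX₀ y) _ hWV
    have h1 : |g z - g x₀| < ε/3 := hUprop z (hVU hzV) hzX₀
    refine ⟨z, hzW, hzX₀, ?_⟩
    have h2 : |g y - g x₀| ≤ |g y - g z| + |g z - g x₀| := abs_sub_le _ _ _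
    have h3 : |g z - g y| = |g y - g z| := abs_sub_comm _ _
    linarith

/-- Constructive content of the proof of Grothendieck's double limit theorem:
a discontinuous function in the pointwise closure of a uniformly bounded family `A`
of continuous functions yields an explicit violation of the double limit condition,
with witnessing sequences from `A` and from the dense set `X₀`. -/
theorem exists_double_limit_violation_of_discontinuous {X : Type*} [TopologicalSpace X]
    [CompactSpace X] [T2Space X]
    (X₀ : Set X) (hX₀ : Dense X₀)
    (A : Set (X → ℝ)) (hcont : ∀ f ∈ A, Continuous f)
    (C : ℝ) (hbd : ∀ f ∈ A, ∀ x, |f x| ≤ C)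
    (g : X → ℝ) (hg : g ∈ closure A) (hdisc : ∃ x : X, ¬ ContinuousAt g x) :
    ∃ (f : ℕ → X → ℝ) (x : ℕ → X) (r s : ℝ),
      (∀ m, f m ∈ A) ∧ (∀ n, x n ∈ X₀) ∧ r ≠ s ∧
      (∀ n, Tendsto (fun m => f m (x n)) atTop (𝓝 (g (x n)))) ∧
      Tendsto (fun n => g (x n)) atTop (𝓝 r) ∧
      ∃ d : ℕ → ℝ,
        (∀ m, Tendsto (fun n => f m (x n)) atTop (𝓝 (d m))) ∧
        Tendsto d atTop (𝓝 s) := by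
  classical
  obtain ⟨p, δ, hδ, hp⟩ := exists_bad_point' X₀ hX₀ g hdisc
  -- g is bounded by C
  have hgbd : ∀ x : X, |g x| ≤ C := by
    intro x
    have hcl : IsClosed ((fun h : X → ℝ => h x) ⁻¹' {y : ℝ | |y| ≤ C}) :=
      (isClosed_le continuous_abs continuous_const).preimage (continuous_apply x)
    have h1 : closure A ⊆ (fun h : X → ℝ => h x) ⁻¹' {y : ℝ | |y| ≤ C} :=
      closure_minimal (fun f hf => hbd f hf x) hcl
    exact h1 hg
  -- the combined recursive construction via finite extension
  set P : ℕ × (X → ℝ) × X → Prop := fun c =>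
    c.2.1 ∈ A ∧ c.2.2 ∈ X₀ ∧ |c.2.1 p - g p| < 1/(c.1+1) ∧ δ ≤ |g c.2.2 - g p| with hP_def
  set r : ℕ × (X → ℝ) × X → ℕ × (X → ℝ) × X → Prop := fun c c' =>
    c.1 < c'.1 ∧ |c'.2.1 c.2.2 - g c.2.2| < 1/(c'.1+1) ∧
      |c.2.1 c'.2.2 - c.2.1 p| < 1/(c'.1+1) with hr_def
  have hstep : ∀ s : Finset (ℕ × (X → ℝ) × X), (∀ c ∈ s, P c) →
      ∃ y, P y ∧ ∀ c ∈ s, r c y := by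
    intro s hs
    set K : ℕ := (s.sup fun c => c.1) + 1 with hK_def
    have hK : ∀ c ∈ s, c.1 < K := fun c hc =>
      Nat.lt_succ_of_le (Finset.le_sup (f := fun c => c.1) hc)
    have hε' : (0:ℝ) < 1/(K+1) := by positivity
    obtain ⟨f, hfA, hf⟩ := approx_on_finset' A g hg
      (insert p (s.image fun c => c.2.2)) hε'
    have hUopen : IsOpen {z : X | ∀ c ∈ s, |c.2.1 z - c.2.1 p| < 1/(K+1)} := by
      have heq : {z : X | ∀ c ∈ s, |c.2.1 z - c.2.1 p| < 1/(K+1)}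
          = ⋂ c ∈ s, c.2.1 ⁻¹' Metric.ball (c.2.1 p) (1/(K+1)) := by
        ext z; simp [Metric.mem_ball, Real.dist_eq]
      rw [heq]
      exact isOpen_biInter_finset fun c hc =>
        Metric.isOpen_ball.preimage (hcont _ (hs c hc).1)
    have hpU : p ∈ {z : X | ∀ c ∈ s, |c.2.1 z - c.2.1 p| < 1/(K+1)} := by
      intro c _; simpa using hε'
    obtain ⟨x, hxU, hxX₀, hxδ⟩ := hp _ (hUopen.mem_nhds hpU)
    refine ⟨(K, f, x), ⟨hfA, hxX₀, ?_, hxδ⟩, ?_⟩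
    · exact hf p (Finset.mem_insert_self _ _)
    · intro c hc
      exact ⟨hK c hc,
        hf c.2.2 (Finset.mem_insert_of_mem (Finset.mem_image_of_mem _ hc)),
        hxU c hc⟩
  obtain ⟨c, hPc, hrc⟩ := exists_seq_of_forall_finset_exists P r hstep
  set k : ℕ → ℕ := fun n => (c n).1 with hk_def
  have hkmono : StrictMono k := strictMono_nat_of_lt_succ fun n =>
    (hrc n (n+1) (Nat.lt_succ_self n)).1
  have hkn : ∀ n, n ≤ k n := fun n => hkmono.le_apply
  set f : ℕ → X → ℝ := fun n => (c n).2.1 with hf_def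
  set x : ℕ → X := fun n => (c n).2.2 with hx_def
  have hbound : ∀ n : ℕ, (1:ℝ)/(k n + 1) ≤ 1/(n+1) := by
    intro n
    apply one_div_le_one_div_of_le (by positivity)
    have : (n:ℝ) ≤ k n := Nat.cast_le.mpr (hkn n)
    linarith
  have tendsto0 : Tendsto (fun n : ℕ => (1:ℝ)/(n+1)) atTop (𝓝 0) :=
    tendsto_one_div_add_atTop_nhds_zero_nat
  -- condition: for each n, f m (x n) → g (x n)
  have cond1 : ∀ n, Tendsto (fun m => f m (x n)) atTop (𝓝 (g (x n))) := by
    intro n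
    rw [tendsto_iff_dist_tendsto_zero]
    apply squeeze_zero' (Eventually.of_forall fun m => dist_nonneg) ?_ tendsto0
    filter_upwards [eventually_gt_atTop n] with m hm
    have h1 := (hrc n m hm).2.1
    rw [Real.dist_eq]
    exact le_trans (le_of_lt h1) (hbound m)
  -- condition: for each m, f m (x n) → f m p
  have cond2 : ∀ m, Tendsto (fun n => f m (x n)) atTop (𝓝 (f m p)) := by
    intro m
    rw [tendsto_iff_dist_tendsto_zero]
    apply squeeze_zero' (Eventually.of_forall fun n => dist_nonneg) ?_ tendsto0
    filter_upwards [eventually_gt_atTop m] with n hn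
    have h1 := (hrc m n hn).2.2
    rw [Real.dist_eq]
    exact le_trans (le_of_lt h1) (hbound n)
  -- condition: f m p → g p
  have cond3 : Tendsto (fun m => f m p) atTop (𝓝 (g p)) := by
    rw [tendsto_iff_dist_tendsto_zero]
    apply squeeze_zero' (Eventually.of_forall fun m => dist_nonneg) ?_ tendsto0
    filter_upwards with m
    have h1 := (hPc m).2.2.1
    rw [Real.dist_eq]
    exact le_trans (le_of_lt h1) (hbound m)
  -- extract a convergent subsequence of g (x n)
  have hmem : ∀ n, g (x n) ∈ Set.Icc (-C) C := fun n => by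
    have := hgbd (x n); rw [abs_le] at this; exact this
  obtain ⟨R, _, φ, hφ, htend⟩ :=
    (isCompact_Icc : IsCompact (Set.Icc (-C) C)).tendsto_subseq hmem
  have hRne : R ≠ g p := by
    have h1 : Tendsto (fun n => |g (x (φ n)) - g p|) atTop (𝓝 (|R - g p|)) :=
      (htend.sub tendsto_const_nhds).abs
    have h2 : δ ≤ |R - g p| :=
      ge_of_tendsto h1 (Eventually.of_forall fun n => (hPc (φ n)).2.2.2)
    intro h
    rw [h, sub_self, abs_zero] at h2
    linarith
  refine ⟨f, fun n => x (φ n), R, g p, fun m => (hPc m).1, fun n => (hPc (φ n)).2.1,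
    hRne, fun n => cond1 (φ n), htend, fun m => f m p,
    fun m => (cond2 m).comp hφ.tendsto_atTop, cond3⟩
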